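/- Let Γ = {b_1,…,b_m}, Σ = Γ ∪ {#} with # ∉ Γ, and k ≥ 1. Let gc be the (k-1)-tuple of length constraints all equal to (m-1, 3m-1). Fix sets W_1,…,W_k ⊆ Γ with non-empty string representations w_j (|w_j| = |W_j| ≤ m, letters of w_j exactly W_j), and define S = w_1 #^{m-1} w_2 #^{m-1} ⋯ #^{m-1} w_k. Then the set of gc-subsequences of S that contain no occurrence of # equals W_1 · W_2 ⋯ W_k (i.e., exactly the strings u ∈ Γ^k with u[j] ∈ W_j for all j). -/

import Mathlib

/-- `p` is a subsequence of `v` via an embedding whose `i`-th gap length lies between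
`lo i` and `hi i`. -/
def IsLenSubseq {α : Type*} (v p : List α) (lo hi : ℕ → ℕ) : Prop :=
  ∃ e : ℕ → ℕ,
    (∀ i j, i < j → j < p.length → e i < e j) ∧
    (∀ i, i < p.length → e i < v.length) ∧
    (∀ i, i < p.length → v[e i]? = p[i]?) ∧
    (∀ i, i + 1 < p.length →
      lo i ≤ e (i + 1) - (e i + 1) ∧ e (i + 1) - (e i + 1) ≤ hi i)


def icOff {α : Type*} (sep : List α) : List (List α) → ℕ → ℕ
  | [], _ => 0
  | _ :: _, 0 => 0
  | a :: rest, j+1 => a.length + sep.length + icOff sep rest j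

lemma icOff_nil {α : Type*} (sep : List α) (j : ℕ) : icOff sep [] j = 0 := rfl

lemma icOff_zero {α : Type*} (sep : List α) (L : List (List α)) : icOff sep L 0 = 0 := by
  cases L <;> rfl

lemma icOff_succ {α : Type*} (sep : List α) :
    ∀ (L : List (List α)) (j : ℕ) (lj : List α), L[j]? = some lj →
      icOff sep L (j+1) = icOff sep L j + lj.length + sep.length
  | [], j, lj, h => by simp at h
  | a :: rest, 0, lj, h => by
      simp only [List.getElem?_cons_zero, Option.some.injEq] at h
      subst h
      show a.length + sep.length + icOff sep rest 0 = icOff sep (a :: rest) 0 + a.length + sep.length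
      rw [icOff_zero, icOff_zero]; omega
  | a :: rest, j+1, lj, h => by
      simp only [List.getElem?_cons_succ] at h
      show a.length + sep.length + icOff sep rest (j+1)
          = a.length + sep.length + icOff sep rest j + lj.length + sep.length
      rw [icOff_succ sep rest j lj h]; omega

lemma icOff_mono {α : Type*} (sep : List α) :
    ∀ (L : List (List α)) (i j : ℕ), i ≤ j → icOff sep L i ≤ icOff sep L j := by
  intro L
  induction L with
  | nil => intro i j _; rw [icOff_nil, icOff_nil]
  | cons a rest ih =>
    intro i j hij
    cases i with
    | zero => rw [icOff_zero]; exact Nat.zero_le _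
    | succ i =>
      cases j with
      | zero => omega
      | succ j =>
        show a.length + sep.length + icOff sep rest i ≤ a.length + sep.length + icOff sep rest j
        have := ih i j (by omega); omega

lemma ic_cons₂ {α : Type*} (sep a b : List α) (l : List (List α)) :
    List.intercalate sep (a :: b :: l) = a ++ sep ++ List.intercalate sep (b :: l) := by
  simp [List.intercalate]

lemma ic_get {α : Type*} (sep : List α) :
    ∀ (L : List (List α)) (j : ℕ) (lj : List α) (t : ℕ), L[j]? = some lj → t < lj.length →
      (List.intercalate sep L)[icOff sep L j + t]? = lj[t]? := by
  intro L
  induction L with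
  | nil => intro j lj t h _; simp at h
  | cons a rest ih =>
    intro j lj t h ht
    cases j with
    | zero =>
      simp only [List.getElem?_cons_zero, Option.some.injEq] at h
      subst h
      rw [icOff_zero, Nat.zero_add]
      cases rest with
      | nil => simp [List.intercalate]
      | cons b rest' =>
        rw [ic_cons₂, List.append_assoc, List.getElem?_append]
        simp [ht]
    | succ j =>
      simp only [List.getElem?_cons_succ] at h
      cases rest with
      | nil => simp at h
      | cons b rest' =>
        have hoff : icOff sep (a :: b :: rest') (j+1) + t
            = (a ++ sep).length + (icOff sep (b :: rest') j + t) := by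
          show a.length + sep.length + icOff sep (b :: rest') j + t = _
          simp; omega
        rw [ic_cons₂, hoff, List.getElem?_append_right (by omega), Nat.add_sub_cancel_left]
        exact ih j lj t h ht

lemma ic_decode {α : Type*} (sep : List α) :
    ∀ (L : List (List α)) (q : ℕ) (x : α), (List.intercalate sep L)[q]? = some x →
      x ∈ sep ∨ ∃ j lj t, L[j]? = some lj ∧ t < lj.length ∧ q = icOff sep L j + t ∧
        lj[t]? = some x := by
  intro L
  induction L with
  | nil => intro q x h; simp [List.intercalate] at h
  | cons a rest ih =>
    intro q x h
    cases rest with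
    | nil =>
      simp only [List.intercalate, List.intersperse_singleton, List.flatten] at h
      right
      have hq : q < a.length := (List.getElem?_eq_some_iff.mp (by simpa using h)).1
      exact ⟨0, a, q, by simp, hq, by rw [icOff_zero, Nat.zero_add], by simpa using h⟩
    | cons b rest' =>
      rw [ic_cons₂] at h
      by_cases h1 : q < a.length
      · right
        rw [List.append_assoc, List.getElem?_append] at h
        · exact ⟨0, a, q, by simp, h1, by rw [icOff_zero, Nat.zero_add], by simp [h1] at h ⊢; exact h⟩
      · by_cases h2 : q < a.length + sep.length
        · left
          rw [List.append_assoc, List.getElem?_append] at h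
          simp only [h1, if_neg, if_false] at h
          rw [List.getElem?_append] at h
          have : q - a.length < sep.length := by omega
          simp only [this, if_pos] at h
          exact List.mem_of_getElem? h
        · have hlen : (a ++ sep).length ≤ q := by simp; omega
          rw [List.getElem?_append_right hlen] at h
          rcases ih (q - (a ++ sep).length) x h with hmem | ⟨j, lj, t, hj, ht, hq, hv⟩
          · exact Or.inl hmem
          · right
            refine ⟨j+1, lj, t, by simpa using hj, ht, ?_, hv⟩
            show q = a.length + sep.length + icOff sep (b :: rest') j + t
            simp only [List.length_append] at hq ⊢
            omega

/-- The alphabet Σ = Γ ∪ {#} is modelled as `Option Γ`, with `#` being `none`.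
For `S = w_1 #^{m-1} w_2 #^{m-1} ⋯ #^{m-1} w_k` (where `w_j` is a duplicate-free string
representation of `W_j ⊆ Γ` and `m = |Γ|`), with all length constraints `(m-1, 3m-1)`,
the gc-subsequences of `S` of length `k` containing no `#` are exactly the strings of
`W_1 · W_2 ⋯ W_k`. -/
theorem stmt7 {Γ : Type*} [Fintype Γ] [DecidableEq Γ] (k : ℕ) (hk : 1 ≤ k)
    (W : Fin k → Finset Γ) (hW : ∀ j, (W j).Nonempty)
    (ws : Fin k → List Γ) (hnd : ∀ j, (ws j).Nodup)
    (hset : ∀ j, (ws j).toFinset = W j) :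
    {p : List (Option Γ) | p.length = k ∧
        IsLenSubseq
          (List.intercalate (List.replicate (Fintype.card Γ - 1) (none : Option Γ))
            (List.ofFn fun j : Fin k => (ws j).map some))
          p (fun _ => Fintype.card Γ - 1) (fun _ => 3 * Fintype.card Γ - 1) ∧
        (none : Option Γ) ∉ p} =
      {p : List (Option Γ) | ∃ u : Fin k → Γ,
        p = List.ofFn (fun j => some (u j)) ∧ ∀ j, u j ∈ W j} := by
    classical
  set m := Fintype.card Γ with hm
  obtain ⟨a0, ha0⟩ := hW ⟨0, hk⟩
  have hm1 : 1 ≤ m := by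
    have : Nonempty Γ := ⟨a0⟩
    exact Fintype.card_pos
  set sep : List (Option Γ) := List.replicate (m-1) (none : Option Γ) with hsep
  set L : List (List (Option Γ)) := List.ofFn (fun j : Fin k => (ws j).map some) with hL
  have hLlen : L.length = k := by simp [hL]
  have hLget : ∀ (j : ℕ) (h : j < k), L[j]? = some ((ws ⟨j,h⟩).map some) := by
    intro j h
    rw [hL, List.getElem?_eq_getElem (by simp [h]), List.getElem_ofFn]
  have hwslen : ∀ j : Fin k, (ws j).length ≤ m := fun j => by
    rw [← List.toFinset_card_of_nodup (hnd j), hset j]; exact Finset.card_le_univ _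
  have hwspos : ∀ j : Fin k, 1 ≤ (ws j).length := fun j => by
    obtain ⟨a, ha⟩ := hW j
    rw [← hset j, List.mem_toFinset] at ha
    exact List.length_pos_iff.mpr (List.ne_nil_of_mem ha)
  have hseplen : sep.length = m - 1 := by simp [hsep]
  set S := List.intercalate sep L with hS
  ext p
  simp only [Set.mem_setOf_eq]
  constructor
  · rintro ⟨hplen, ⟨e, he1, he2, he3, he4⟩, hnone⟩
    have key : ∀ i, ∃ j t : ℕ, i < k → ∃ hj : j < k,
        e i = icOff sep L j + t ∧ t < (ws ⟨j,hj⟩).length ∧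
        ∃ a : Γ, (ws ⟨j,hj⟩)[t]? = some a ∧ p[i]? = some (some a) := by
      intro i
      by_cases hik : i < k
      · have hip : i < p.length := by omega
        have hpi : p[i]? = some p[i] := List.getElem?_eq_getElem hip
        have hx : p[i] ≠ none := fun hcon => hnone (hcon ▸ List.getElem_mem hip)
        obtain ⟨a, ha⟩ : ∃ a, p[i] = some a := Option.ne_none_iff_exists'.mp hx
        have hSe : S[e i]? = some (some a) := by
          rw [he3 i hip, hpi, ha]
        rcases ic_decode sep L (e i) (some a) hSe with hmem | ⟨j, lj, t, hjL, htlj, hq, hval⟩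
        · exact absurd (List.eq_of_mem_replicate (hsep ▸ hmem)) (by simp)
        · have hjk : j < k := by
            have := (List.getElem?_eq_some_iff.mp hjL).1; omega
          rw [hLget j hjk, Option.some.injEq] at hjL
          subst hjL
          rw [List.length_map] at htlj
          rw [List.getElem?_map] at hval
          have hwa : (ws ⟨j,hjk⟩)[t]? = some a := by
            rcases h' : (ws ⟨j,hjk⟩)[t]? with _ | b
            · rw [h'] at hval; simp at hval
            · rw [h'] at hval; simp at hval; rw [hval]
          exact ⟨j, t, fun _ => ⟨hjk, hq, htlj, a, hwa, by rw [hpi, ha]⟩⟩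
      · exact ⟨0, 0, fun h => absurd h hik⟩
    choose J T hJT using key
    have step : ∀ i, i + 1 < k → J i < J (i+1) := by
      intro i h1
      obtain ⟨hj1, hq1, ht1, a1, -, -⟩ := hJT i (by omega)
      obtain ⟨hj2, hq2, ht2, a2, -, -⟩ := hJT (i+1) h1
      have hlt : e i < e (i+1) := he1 i (i+1) (by omega) (by omega)
      have hgap := (he4 i (by omega)).1
      simp only at hgap
      by_contra hcon
      push_neg at hcon
      rcases Nat.lt_or_ge (J (i+1)) (J i) with hlt2 | hge
      · have hsucc := icOff_succ sep L (J (i+1)) _ (hLget (J (i+1)) hj2)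
        rw [List.length_map] at hsucc
        have hmono := icOff_mono sep L (J (i+1) + 1) (J i) (by omega)
        omega
      · have hJeq : J (i+1) = J i := by omega
        have hfin : (⟨J (i+1), hj2⟩ : Fin k) = ⟨J i, hj1⟩ := Fin.ext hJeq
        rw [hfin] at ht2
        have hoffeq : icOff sep L (J (i+1)) = icOff sep L (J i) := by rw [hJeq]
        have := hwslen ⟨J i, hj1⟩
        omega
    have shift : ∀ d i, i + d < k → J i + d ≤ J (i + d) := by
      intro d
      induction d with
      | zero => intro i _; simp
      | succ n ih =>
        intro i h
        have h1 := ih i (by omega)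
        have h2 := step (i+n) (by omega)
        have h3 : i + (n+1) = (i+n)+1 := rfl
        rw [h3]
        omega
    have hlow : ∀ i, i < k → i ≤ J i := by
      intro i
      induction i with
      | zero => intro _; exact Nat.zero_le _
      | succ n ih =>
        intro h
        have hs := step n h
        have hn := ih (by omega)
        omega
    have Jeq : ∀ i, i < k → J i = i := by
      intro i h
      have h1 := shift (k-1-i) i (by omega)
      have h2 : i + (k-1-i) = k-1 := by omega
      rw [h2] at h1
      obtain ⟨hjk, -⟩ := hJT (k-1) (by omega)
      have := hlow i h
      omega
    have hu : ∀ i (h : i < k), ∃ a : Γ, p[i]? = some (some a) ∧ a ∈ W ⟨i, h⟩ := by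
      intro i h
      obtain ⟨hjk, hq, htl, a, hwa, hpa⟩ := hJT i h
      have hfin : (⟨J i, hjk⟩ : Fin k) = ⟨i, h⟩ := Fin.ext (Jeq i h)
      rw [hfin] at hwa
      refine ⟨a, hpa, ?_⟩
      rw [← hset ⟨i,h⟩, List.mem_toFinset]
      exact List.mem_of_getElem? hwa
    choose u hu1 hu2 using hu
    refine ⟨fun j => u j.1 j.2, ?_, fun j => by simpa using hu2 j.1 j.2⟩
    apply List.ext_getElem?
    intro i
    by_cases h : i < k
    · rw [hu1 i h, List.getElem?_eq_getElem (by simpa using h), List.getElem_ofFn]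
    · rw [List.getElem?_eq_none (by omega), List.getElem?_eq_none (by simpa using Nat.le_of_not_lt h)]
  · rintro ⟨u, rfl, huW⟩
    have humem : ∀ j : Fin k, u j ∈ ws j := fun j => by
      rw [← List.mem_toFinset, hset j]; exact huW j
    have hidx : ∀ (i : ℕ) (h : i < k),
        (ws ⟨i,h⟩).idxOf (u ⟨i,h⟩) < (ws ⟨i,h⟩).length ∧
        (ws ⟨i,h⟩)[(ws ⟨i,h⟩).idxOf (u ⟨i,h⟩)]? = some (u ⟨i,h⟩) := by
      intro i h
      have hm' := humem ⟨i,h⟩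
      have h1 := List.idxOf_lt_length_iff.mpr hm'
      refine ⟨h1, ?_⟩
      rw [List.getElem?_eq_getElem h1]
      simp [List.getElem_idxOf]
    have heval : ∀ (i : ℕ) (h : i < k),
        S[icOff sep L i + (ws ⟨i,h⟩).idxOf (u ⟨i,h⟩)]? = some (some (u ⟨i,h⟩)) := by
      intro i h
      rw [ic_get sep L i _ _ (hLget i h) (by rw [List.length_map]; exact (hidx i h).1)]
      rw [List.getElem?_map, (hidx i h).2]
      rfl
    have hesucc : ∀ (i : ℕ) (h : i < k),
        icOff sep L (i+1) = icOff sep L i + (ws ⟨i,h⟩).length + (m-1) := by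
      intro i h
      rw [icOff_succ sep L i _ (hLget i h), List.length_map, hseplen]
    refine ⟨by simp, ⟨fun i => icOff sep L i +
        (if h : i < k then (ws ⟨i,h⟩).idxOf (u ⟨i,h⟩) else 0), ?_, ?_, ?_, ?_⟩, by simp [List.mem_ofFn]⟩
    · intro i j hij hj
      simp only [List.length_ofFn] at hj
      have hik : i < k := by omega
      simp only [dif_pos hik, dif_pos hj]
      have h1 := (hidx i hik).1
      have h2 := hesucc i hik
      have h3 := icOff_mono sep L (i+1) j hij
      omega
    · intro i hi
      simp only [List.length_ofFn] at hi
      simp only [dif_pos hi]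
      exact (List.getElem?_eq_some_iff.mp (heval i hi)).1
    · intro i hi
      simp only [List.length_ofFn] at hi
      simp only [dif_pos hi]
      rw [heval i hi, List.getElem?_eq_getElem (by simpa using hi), List.getElem_ofFn]
    · intro i hi
      simp only [List.length_ofFn] at hi
      have hik : i < k := by omega
      simp only [dif_pos hik, dif_pos hi]
      have h1 := (hidx i hik).1
      have h2 := (hidx (i+1) hi).1
      have h3 := hesucc i hik
      have h4 := hwslen ⟨i, hik⟩
      have h5 := hwslen ⟨i+1, hi⟩
      constructor <;> omega
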